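/- Every finite game arena Γ admits a solution of the optimality equations: there exist functions G, B : S → ℝ such that (G, B) ⊨ Opt(Γ). -/

import Mathlib

open Filter
open scoped Classical

/-- A (turn-based, possibly infinite) game arena: states are partitioned into
Min-states (`isMin s`) and Max-states (`¬ isMin s`); `avail s` is the nonempty
set of actions available at `s`; `tr` and `price` are the transition and price
functions (their values only matter on available actions). -/
structure GameArena (S A : Type) where
  isMin : S → Prop
  avail : S → Set A
  avail_nonempty : ∀ s, (avail s).Nonempty
  tr : S → A → S
  price : S → A → ℝ

namespace GameArena

variable {S A : Type}

/-- A finite play: the initial state together with the list of (action, state)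
steps taken so far, most recent step first. -/
abbrev FinPlay (S A : Type) := S × List (A × S)

/-- The last state of a finite play. -/
def last (ρ : FinPlay S A) : S :=
  match ρ.2 with
  | [] => ρ.1
  | (_, s) :: _ => s

/-- A strategy of player Min: on every finite play ending in a Min state it
chooses an available action. -/
def IsMinStrategy (Γ : GameArena S A) (μ : FinPlay S A → A) : Prop :=
  ∀ ρ : FinPlay S A, Γ.isMin (last ρ) → μ ρ ∈ Γ.avail (last ρ)

/-- A strategy of player Max: on every finite play ending in a Max state it
chooses an available action. -/
def IsMaxStrategy (Γ : GameArena S A) (χ : FinPlay S A → A) : Prop :=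
  ∀ ρ : FinPlay S A, ¬ Γ.isMin (last ρ) → χ ρ ∈ Γ.avail (last ρ)

/-- A strategy is positional if its choice depends only on the last state. -/
def Positional (σ : FinPlay S A → A) : Prop :=
  ∀ ρ ρ' : FinPlay S A, last ρ = last ρ' → σ ρ = σ ρ'

/-- The finite prefixes of the unique play from `s` in which Min plays `μ`
and Max plays `χ`. -/
noncomputable def hist (Γ : GameArena S A) (μ χ : FinPlay S A → A) (s : S) :
    ℕ → FinPlay S A
  | 0 => (s, [])
  | n + 1 =>
      let ρ := Γ.hist μ χ s n
      let a := if Γ.isMin (last ρ) then μ ρ else χ ρ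
      (ρ.1, (a, Γ.tr (last ρ) a) :: ρ.2)

/-- The `n`-th state of the run `Run(s, μ, χ)`. -/
noncomputable def runState (Γ : GameArena S A) (μ χ : FinPlay S A → A) (s : S)
    (n : ℕ) : S :=
  last (Γ.hist μ χ s n)

/-- The action taken from the `n`-th state of the run `Run(s, μ, χ)`. -/
noncomputable def runAct (Γ : GameArena S A) (μ χ : FinPlay S A → A) (s : S)
    (n : ℕ) : A :=
  if Γ.isMin (last (Γ.hist μ χ s n)) then μ (Γ.hist μ χ s n)
  else χ (Γ.hist μ χ s n)

/-- Cesàro average of the first `n` prices along the run `Run(s, μ, χ)`. -/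
noncomputable def avg (Γ : GameArena S A) (μ χ : FinPlay S A → A) (s : S)
    (n : ℕ) : ℝ :=
  (∑ i ∈ Finset.range n, Γ.price (Γ.runState μ χ s i) (Γ.runAct μ χ s i)) / n

/-- `A_Min(Run(s, μ, χ))`: the limsup of the Cesàro averages of prices. -/
noncomputable def AMin (Γ : GameArena S A) (μ χ : FinPlay S A → A) (s : S) :
    EReal :=
  Filter.limsup (fun n => ((Γ.avg μ χ s n : ℝ) : EReal)) atTop

/-- `A_Max(Run(s, μ, χ))`: the liminf of the Cesàro averages of prices. -/
noncomputable def AMax (Γ : GameArena S A) (μ χ : FinPlay S A → A) (s : S) :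
    EReal :=
  Filter.liminf (fun n => ((Γ.avg μ χ s n : ℝ) : EReal)) atTop

/-- The upper value `Val*` of the mean-payoff game. -/
noncomputable def upperVal (Γ : GameArena S A) (s : S) : EReal :=
  ⨅ μ : {μ // Γ.IsMinStrategy μ}, ⨆ χ : {χ // Γ.IsMaxStrategy χ},
    Γ.AMin μ.1 χ.1 s

/-- The lower value `Val_*` of the mean-payoff game. -/
noncomputable def lowerVal (Γ : GameArena S A) (s : S) : EReal :=
  ⨆ χ : {χ // Γ.IsMaxStrategy χ}, ⨅ μ : {μ // Γ.IsMinStrategy μ},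
    Γ.AMax μ.1 χ.1 s

/-- `(G, B) ⊨ Opt(Γ)`: gain and bias optimality equations, together with the
nonemptiness of the sets of gain-preserving actions. -/
def SatOpt (Γ : GameArena S A) (G B : S → ℝ) : Prop :=
  ∀ s : S,
    (Γ.isMin s →
      G s = sInf {x | ∃ a ∈ Γ.avail s, x = G (Γ.tr s a)} ∧
      {a | a ∈ Γ.avail s ∧ G (Γ.tr s a) = G s}.Nonempty ∧
      B s = sInf {x | ∃ a ∈ Γ.avail s, G (Γ.tr s a) = G s ∧
              x = Γ.price s a - G s + B (Γ.tr s a)}) ∧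
    (¬ Γ.isMin s →
      G s = sSup {x | ∃ a ∈ Γ.avail s, x = G (Γ.tr s a)} ∧
      {a | a ∈ Γ.avail s ∧ G (Γ.tr s a) = G s}.Nonempty ∧
      B s = sSup {x | ∃ a ∈ Γ.avail s, G (Γ.tr s a) = G s ∧
              x = Γ.price s a - G s + B (Γ.tr s a)})

end GameArena


section Aux
open Finset Topology


noncomputable def gAux (q : ℕ → ℝ) (N p : ℕ) : ℝ := (∑ i ∈ Finset.range p, q (N + i)) / p

noncomputable def hAux (q : ℕ → ℝ) (N p : ℕ) (x : ℝ) : ℝ :=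
  (∑ i ∈ Finset.range N, (q i - gAux q N p) * x ^ i)
  - x ^ N * (∑ i ∈ Finset.range p, (q (N + i) - gAux q N p) * (∑ j ∈ Finset.range i, x ^ j))
      / (∑ j ∈ Finset.range p, x ^ j)

lemma expandAux (q V : ℕ → ℝ) (x : ℝ) (hstep : ∀ i, V i = q i + x * V (i + 1)) :
    ∀ (m i : ℕ), V i = (∑ k ∈ Finset.range m, x ^ k * q (i + k)) + x ^ m * V (i + m) := by
  intro m
  induction m with
  | zero => intro i; simp
  | succ m ih =>
      intro i
      rw [ih i, Finset.sum_range_succ, hstep (i + m)]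
      ring_nf
      simp only [Nat.add_comm _ i]

lemma key_identity (q V : ℕ → ℝ) (x : ℝ) (hx0 : 0 < x) (hx1 : x < 1)
    (hstep : ∀ i, V i = q i + x * V (i + 1)) (N p : ℕ) (hp : 0 < p)
    (hVper : V (N + p) = V N) :
    V 0 = gAux q N p / (1 - x) + hAux q N p x := by
  set Gv := gAux q N p with hGv
  set Dp := ∑ j ∈ Finset.range p, x ^ j with hDpdef
  set Qx := ∑ k ∈ Finset.range p, x ^ k * q (N + k) with hQxdef
  set Rn := ∑ i ∈ Finset.range p, (q (N + i) - Gv) * (∑ j ∈ Finset.range i, x ^ j) with hRndef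
  have hpR : (p : ℝ) ≠ 0 := Nat.cast_ne_zero.mpr hp.ne'
  have h1 : V 0 = (∑ k ∈ Finset.range N, x ^ k * q k) + x ^ N * V N := by
    simpa using expandAux q V x hstep N 0
  have h2 : V N = Qx + x ^ p * V N := by
    have := expandAux q V x hstep p N
    rwa [hVper] at this
  have h3 : (1 - x ^ p) * V N = Qx := by linear_combination h2
  have hDp : 0 < Dp :=
    Finset.sum_pos (fun j _ => pow_pos hx0 j) (Finset.nonempty_range_iff.mpr hp.ne')
  have hgeomp : Dp * (x - 1) = x ^ p - 1 := geom_sum_mul x p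
  have hfac : 1 - x ^ p = (1 - x) * Dp := by linear_combination hgeomp
  have hGmul : Gv * p = ∑ k ∈ Finset.range p, q (N + k) := by
    rw [hGv, gAux, div_mul_cancel₀ _ hpR]
  have hzero : ∑ i ∈ Finset.range p, (q (N + i) - Gv) = 0 := by
    rw [Finset.sum_sub_distrib, Finset.sum_const, Finset.card_range, nsmul_eq_mul]
    linarith [hGmul]
  have hstepC : Qx - Gv * Dp = (x - 1) * Rn := by
    have e1 : (x - 1) * Rn = ∑ i ∈ Finset.range p, ((q (N + i) - Gv) * x ^ i - (q (N + i) - Gv)) := by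
      rw [hRndef, Finset.mul_sum]
      apply Finset.sum_congr rfl
      intro i _
      linear_combination (q (N + i) - Gv) * geom_sum_mul x i
    rw [e1, Finset.sum_sub_distrib, hzero, sub_zero, hQxdef, hDpdef, Finset.mul_sum,
      ← Finset.sum_sub_distrib]
    apply Finset.sum_congr rfl
    intro i _; ring
  -- final assembly
  have hx1' : (1 : ℝ) - x ≠ 0 := by linarith
  have hVN : V N = Gv / (1 - x) - Rn / Dp := by
    rw [hfac] at h3
    field_simp
    linear_combination h3 + hstepC
  rw [h1, hVN, hAux]
  have hgeomN : (∑ j ∈ Finset.range N, x ^ j) * (x - 1) = x ^ N - 1 := geom_sum_mul x N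
  have hsplit : ∑ i ∈ Finset.range N, (q i - Gv) * x ^ i
      = (∑ k ∈ Finset.range N, x ^ k * q k) - Gv * (∑ j ∈ Finset.range N, x ^ j) := by
    rw [Finset.mul_sum, ← Finset.sum_sub_distrib]
    apply Finset.sum_congr rfl
    intro i _; ring
  rw [hsplit]
  have hSN : (∑ j ∈ Finset.range N, x ^ j) = (1 - x ^ N) / (1 - x) := by
    rw [eq_div_iff hx1']; linear_combination -hgeomN
  rw [hSN, hRndef, hDpdef, hGv]
  ring

lemma hAux_continuousAt (q : ℕ → ℝ) (N p : ℕ) (hp : 0 < p) :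
    ContinuousAt (hAux q N p) 1 := by
  have hden : (∑ j ∈ Finset.range p, (1:ℝ) ^ j) ≠ 0 := by
    simp only [one_pow, Finset.sum_const, Finset.card_range, nsmul_eq_mul, mul_one]
    exact Nat.cast_ne_zero.mpr hp.ne'
  have c1 : Continuous (fun x : ℝ => ∑ i ∈ Finset.range N, (q i - gAux q N p) * x ^ i) :=
    continuous_finset_sum _ fun i _ => (continuous_const.mul (continuous_pow i))
  have c2 : Continuous (fun x : ℝ =>
      ∑ i ∈ Finset.range p, (q (N + i) - gAux q N p) * (∑ j ∈ Finset.range i, x ^ j)) :=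
    continuous_finset_sum _ fun i _ =>
      continuous_const.mul (continuous_finset_sum _ fun j _ => continuous_pow j)
  have c3 : Continuous (fun x : ℝ => ∑ j ∈ Finset.range p, x ^ j) :=
    continuous_finset_sum _ fun j _ => continuous_pow j
  exact c1.continuousAt.sub
    ((((continuous_pow N).continuousAt.mul c2.continuousAt).div c3.continuousAt hden))

section FixedPoint
variable {S A : Type} [Finite S] [Finite A]

lemma exists_good (Γ : GameArena S A) (x : ℝ) (hx0 : 0 < x) (hx1 : x < 1) :
    ∃ (V : S → ℝ) (σ : S → A), (∀ s, σ s ∈ Γ.avail s) ∧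
      (∀ s, V s = Γ.price s (σ s) + x * V (Γ.tr s (σ s))) ∧
      (∀ s, Γ.isMin s → ∀ a ∈ Γ.avail s, V s ≤ Γ.price s a + x * V (Γ.tr s a)) ∧
      (∀ s, ¬ Γ.isMin s → ∀ a ∈ Γ.avail s, Γ.price s a + x * V (Γ.tr s a) ≤ V s) := by
  classical
  cases nonempty_fintype S
  set val : (S → ℝ) → S → A → ℝ := fun v s a => Γ.price s a + x * v (Γ.tr s a) with hval
  set F : (S → ℝ) → (S → ℝ) := fun v s =>
    if Γ.isMin s then sInf (val v s '' Γ.avail s) else sSup (val v s '' Γ.avail s) with hF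
  have himg : ∀ (v : S → ℝ) (s : S), (val v s '' Γ.avail s).Nonempty ∧ (val v s '' Γ.avail s).Finite :=
    fun v s => ⟨(Γ.avail_nonempty s).image _, (Set.toFinite _).image _⟩
  -- one-sided comparison for sInf / sSup over images
  have hinf_le : ∀ (v w : S → ℝ) (s : S) (δ : ℝ), (∀ a ∈ Γ.avail s, val v s a ≤ val w s a + δ) →
      sInf (val v s '' Γ.avail s) ≤ sInf (val w s '' Γ.avail s) + δ := by
    intro v w s δ h
    rw [← sub_le_iff_le_add]
    apply le_csInf ((himg w s).1)
    rintro y ⟨a, ha, rfl⟩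
    have h1 : sInf (val v s '' Γ.avail s) ≤ val v s a :=
      csInf_le (himg v s).2.bddBelow ⟨a, ha, rfl⟩
    have := h a ha
    linarith
  have hsup_le : ∀ (v w : S → ℝ) (s : S) (δ : ℝ), (∀ a ∈ Γ.avail s, val v s a ≤ val w s a + δ) →
      sSup (val v s '' Γ.avail s) ≤ sSup (val w s '' Γ.avail s) + δ := by
    intro v w s δ h
    apply csSup_le ((himg v s).1)
    rintro y ⟨a, ha, rfl⟩
    have h1 : val w s a ≤ sSup (val w s '' Γ.avail s) :=
      le_csSup (himg w s).2.bddAbove ⟨a, ha, rfl⟩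
    have := h a ha
    linarith
  have hlip : LipschitzWith ⟨x, hx0.le⟩ F := by
    apply LipschitzWith.of_dist_le_mul
    intro v w
    have hd : (0:ℝ) ≤ x * dist v w := mul_nonneg hx0.le dist_nonneg
    show dist (F v) (F w) ≤ x * dist v w
    rw [dist_pi_le_iff hd]
    intro s
    have hcomp : ∀ (v w : S → ℝ), ∀ a ∈ Γ.avail s, val v s a ≤ val w s a + x * dist v w := by
      intro v w a _
      have h1 : dist (v (Γ.tr s a)) (w (Γ.tr s a)) ≤ dist v w := dist_le_pi_dist v w _
      rw [Real.dist_eq] at h1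
      have := abs_le.mp h1
      simp only [hval]
      nlinarith [this.1, this.2]
    rw [Real.dist_eq, abs_le]
    constructor
    · simp only [hF]
      split_ifs with h
      · have := hinf_le w v s (x * dist v w)
          (fun a ha => by simpa [dist_comm] using hcomp w v a ha)
        linarith
      · have := hsup_le w v s (x * dist v w)
          (fun a ha => by simpa [dist_comm] using hcomp w v a ha)
        linarith
    · simp only [hF]
      split_ifs with h
      · have := hinf_le v w s (x * dist v w) (hcomp v w)
        linarith
      · have := hsup_le v w s (x * dist v w) (hcomp v w)
        linarith
  have hcontr : ContractingWith ⟨x, hx0.le⟩ F := ⟨by exact_mod_cast hx1, hlip⟩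
  obtain ⟨V, hV⟩ : ∃ V : S → ℝ, Function.IsFixedPt F V :=
    ⟨hcontr.fixedPoint F, hcontr.fixedPoint_isFixedPt⟩
  have hVs : ∀ s, V s = if Γ.isMin s then sInf (val V s '' Γ.avail s)
      else sSup (val V s '' Γ.avail s) := fun s => (congrFun hV s).symm
  have hmem : ∀ s, ∃ a ∈ Γ.avail s, V s = val V s a := by
    intro s
    rw [hVs s]
    split_ifs with h
    · obtain ⟨a, ha, hae⟩ := (himg V s).1.csInf_mem (himg V s).2
      exact ⟨a, ha, hae.symm⟩
    · obtain ⟨a, ha, hae⟩ := (himg V s).1.csSup_mem (himg V s).2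
      exact ⟨a, ha, hae.symm⟩
  choose σ hσ hσe using hmem
  refine ⟨V, σ, hσ, hσe, ?_, ?_⟩
  · intro s hmin a ha
    have h1 : V s = sInf (val V s '' Γ.avail s) := by rw [hVs s, if_pos hmin]
    have h2 : sInf (val V s '' Γ.avail s) ≤ val V s a :=
      csInf_le (himg V s).2.bddBelow ⟨a, ha, rfl⟩
    rw [h1]; exact h2
  · intro s hmax a ha
    have h1 : V s = sSup (val V s '' Γ.avail s) := by rw [hVs s, if_neg hmax]
    have h2 : val V s a ≤ sSup (val V s '' Γ.avail s) :=
      le_csSup (himg V s).2.bddAbove ⟨a, ha, rfl⟩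
    rw [h1]; exact h2
end FixedPoint

open Topology

/-- Every finite game arena admits a solution of the
gain–bias optimality equations. -/
theorem exists_satOpt_of_finite {S A : Type} [Finite S] [Finite A]
    (Γ : GameArena S A) :
    ∃ G B : S → ℝ, Γ.SatOpt G B := by
  classical
  -- the discount sequence tending to 1
  set l : ℕ → ℝ := fun n => 1 - ((n : ℝ) + 2)⁻¹ with hl
  have hl0 : ∀ n : ℕ, 0 < l n := by
    intro n
    have h2 : (1:ℝ) < (n:ℝ) + 2 := by have := Nat.cast_nonneg (α := ℝ) n; linarith
    have h3 := inv_lt_one_of_one_lt₀ h2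
    simp only [hl]; linarith
  have hl1 : ∀ n : ℕ, l n < 1 := by
    intro n
    have h2 : (0:ℝ) < ((n:ℝ) + 2)⁻¹ := by positivity
    simp only [hl]; linarith
  have hne : ∀ n, (1:ℝ) - l n ≠ 0 := fun n => by have := hl1 n; linarith
  have hlt : Tendsto l atTop (𝓝 1) := by
    have h1 : Tendsto (fun n : ℕ => ((n:ℝ) + 2)⁻¹) atTop (𝓝 0) := by
      apply tendsto_inv_atTop_zero.comp
      apply tendsto_atTop_add_const_right
      exact tendsto_natCast_atTop_atTop
    simpa using tendsto_const_nhds.sub h1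
  -- discounted values and optimal policies
  choose V σ hσav hσeq hminle hmaxle using fun n => exists_good Γ (l n) (hl0 n) (hl1 n)
  -- pigeonhole: one policy recurring infinitely often
  obtain ⟨σs, hfib⟩ := Finite.exists_infinite_fiber σ
  have hTinf : (σ ⁻¹' {σs}).Infinite := Set.infinite_coe_iff.mp hfib
  set L : Filter ℕ := atTop ⊓ 𝓟 (σ ⁻¹' {σs}) with hLdef
  haveI hLne : L.NeBot := by
    rw [hLdef]
    exact frequently_iff_neBot.mp (Nat.frequently_atTop_iff_infinite.mpr hTinf)
  have hmemT : ∀ᶠ n in L, σ n = σs := by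
    have h1 : ∀ᶠ n in 𝓟 (σ ⁻¹' {σs}), σ n = σs :=
      eventually_principal.mpr (fun n hn => hn)
    exact h1.filter_mono inf_le_right
  have hσs_av : ∀ t, σs t ∈ Γ.avail t := by
    obtain ⟨n0, hn0⟩ := hTinf.nonempty
    intro t
    have := hσav n0 t
    rwa [show σ n0 = σs from hn0] at this
  -- the recurring policy's orbit data
  set f : S → S := fun t => Γ.tr t (σs t) with hfdef
  set c : S → ℝ := fun t => Γ.price t (σs t) with hcdef
  set q : S → ℕ → ℝ := fun s i => c (f^[i] s) with hqdef
  have horb : ∀ s : S, ∃ N P : ℕ, 0 < P ∧ f^[N + P] s = f^[N] s := by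
    intro s
    obtain ⟨i, j, hij, he⟩ := Finite.exists_ne_map_eq_of_infinite (fun i : ℕ => f^[i] s)
    rcases hij.lt_or_gt with h | h
    · exact ⟨i, j - i, by omega, by rw [show i + (j - i) = j by omega]; exact he.symm⟩
    · exact ⟨j, i - j, by omega, by rw [show j + (i - j) = i by omega]; exact he⟩
  choose Nf pf hpf hcyc using horb
  set G : S → ℝ := fun s => gAux (q s) (Nf s) (pf s) with hGdef
  set B : S → ℝ := fun s => hAux (q s) (Nf s) (pf s) 1 with hBdef
  -- the rational identity for the discounted values, along L
  have hkey : ∀ s : S, ∀ᶠ n in L,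
      V n s = G s / (1 - l n) + hAux (q s) (Nf s) (pf s) (l n) := by
    intro s
    filter_upwards [hmemT] with n hn
    have hstep : ∀ i, V n (f^[i] s) = q s i + l n * V n (f^[i + 1] s) := by
      intro i
      have h1 := hσeq n (f^[i] s)
      rw [hn] at h1
      rw [Function.iterate_succ_apply' f i s]
      simpa only [hqdef, hcdef, hfdef] using h1
    have h2 := key_identity (q s) (fun i => V n (f^[i] s)) (l n) (hl0 n) (hl1 n)
      hstep (Nf s) (pf s) (hpf s) (congrArg (V n) (hcyc s))
    simpa only [Function.iterate_zero_apply, hGdef] using h2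
  have hlL : Tendsto l L (𝓝 1) := hlt.mono_left inf_le_left
  -- bias limits
  have hBlim : ∀ s, Tendsto (fun n => V n s - G s / (1 - l n)) L (𝓝 (B s)) := by
    intro s
    have h1 : Tendsto (fun n => hAux (q s) (Nf s) (pf s) (l n)) L (𝓝 (B s)) := by
      rw [hBdef]
      exact ((hAux_continuousAt (q s) (Nf s) (pf s) (hpf s)).tendsto).comp hlL
    apply h1.congr'
    filter_upwards [hkey s] with n hn
    rw [hn]; ring
  -- gain limits
  have hGlim : ∀ s, Tendsto (fun n => (1 - l n) * V n s) L (𝓝 (G s)) := by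
    intro s
    have h1 : Tendsto (fun n => (1 - l n) * (V n s - G s / (1 - l n)) + G s) L
        (𝓝 ((1 - 1) * B s + G s)) :=
      ((tendsto_const_nhds.sub hlL).mul (hBlim s)).add tendsto_const_nhds
    have h2 : ∀ n, (1 - l n) * (V n s - G s / (1 - l n)) + G s = (1 - l n) * V n s := by
      intro n; rw [mul_sub, mul_div_cancel₀ _ (hne n)]; ring
    rw [show ((1:ℝ) - 1) * B s + G s = G s by ring] at h1
    exact h1.congr h2
  -- limits of one-step values
  have hRHSg : ∀ s a, Tendsto (fun n => (1 - l n) * (Γ.price s a + l n * V n (Γ.tr s a))) L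
      (𝓝 (G (Γ.tr s a))) := by
    intro s a
    have h1 : Tendsto (fun n => (1 - l n) * Γ.price s a + l n * ((1 - l n) * V n (Γ.tr s a))) L
        (𝓝 ((1 - 1) * Γ.price s a + 1 * G (Γ.tr s a))) :=
      ((tendsto_const_nhds.sub hlL).mul tendsto_const_nhds).add (hlL.mul (hGlim _))
    rw [show ((1:ℝ) - 1) * Γ.price s a + 1 * G (Γ.tr s a) = G (Γ.tr s a) by ring] at h1
    exact h1.congr (fun n => by ring)
  have hRHSb : ∀ s a, G (Γ.tr s a) = G s →
      Tendsto (fun n => Γ.price s a + l n * V n (Γ.tr s a) - G s / (1 - l n)) L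
        (𝓝 (Γ.price s a - G s + B (Γ.tr s a))) := by
    intro s a hGa
    have h1 : Tendsto (fun n => Γ.price s a - G s + l n * (V n (Γ.tr s a) - G (Γ.tr s a) / (1 - l n))) L
        (𝓝 (Γ.price s a - G s + 1 * B (Γ.tr s a))) :=
      tendsto_const_nhds.add (hlL.mul (hBlim _))
    rw [show Γ.price s a - G s + 1 * B (Γ.tr s a) = Γ.price s a - G s + B (Γ.tr s a) by ring] at h1
    apply h1.congr
    intro n
    rw [hGa]
    have e : G s / (1 - l n) * (1 - l n) = G s := div_mul_cancel₀ _ (hne n)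
    linear_combination e
  -- the recurring policy is gain- and bias-optimal in the limit
  have hstar : ∀ s, G (Γ.tr s (σs s)) = G s ∧
      B s = Γ.price s (σs s) - G s + B (Γ.tr s (σs s)) := by
    intro s
    have hev : ∀ᶠ n in L, V n s = Γ.price s (σs s) + l n * V n (Γ.tr s (σs s)) := by
      filter_upwards [hmemT] with n hn
      have h1 := hσeq n s; rwa [hn] at h1
    have e1 : Tendsto (fun n => (1 - l n) * V n s) L (𝓝 (G (Γ.tr s (σs s)))) := by
      apply (hRHSg s (σs s)).congr'
      filter_upwards [hev] with n hn
      rw [hn]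
    have hGt : G (Γ.tr s (σs s)) = G s := tendsto_nhds_unique e1 (hGlim s)
    have e2 : Tendsto (fun n => V n s - G s / (1 - l n)) L
        (𝓝 (Γ.price s (σs s) - G s + B (Γ.tr s (σs s)))) := by
      apply (hRHSb s (σs s) hGt).congr'
      filter_upwards [hev] with n hn
      rw [hn]
    exact ⟨hGt, tendsto_nhds_unique (hBlim s) e2⟩
  -- assemble the optimality equations
  refine ⟨G, B, fun s => ⟨fun hmin => ?_, fun hmax => ?_⟩⟩
  · -- Min state
    have hlbG : ∀ x ∈ {x | ∃ a ∈ Γ.avail s, x = G (Γ.tr s a)}, G s ≤ x := by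
      rintro x ⟨a, ha, rfl⟩
      refine le_of_tendsto_of_tendsto' (hGlim s) (hRHSg s a) (fun n => ?_)
      have h1 := hminle n s hmin a ha
      have h2 : (0:ℝ) ≤ 1 - l n := by have := hl1 n; linarith
      exact mul_le_mul_of_nonneg_left h1 h2
    have hmemG : G s ∈ {x | ∃ a ∈ Γ.avail s, x = G (Γ.tr s a)} :=
      ⟨σs s, hσs_av s, ((hstar s).1).symm⟩
    have hlbB : ∀ x ∈ {x | ∃ a ∈ Γ.avail s, G (Γ.tr s a) = G s ∧
        x = Γ.price s a - G s + B (Γ.tr s a)}, B s ≤ x := by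
      rintro x ⟨a, ha, hGa, rfl⟩
      refine le_of_tendsto_of_tendsto' (hBlim s) (hRHSb s a hGa) (fun n => ?_)
      exact sub_le_sub_right (hminle n s hmin a ha) _
    have hmemB : B s ∈ {x | ∃ a ∈ Γ.avail s, G (Γ.tr s a) = G s ∧
        x = Γ.price s a - G s + B (Γ.tr s a)} :=
      ⟨σs s, hσs_av s, (hstar s).1, (hstar s).2⟩
    refine ⟨le_antisymm (le_csInf ⟨_, hmemG⟩ hlbG) (csInf_le ⟨G s, hlbG⟩ hmemG),
      ⟨σs s, hσs_av s, (hstar s).1⟩,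
      le_antisymm (le_csInf ⟨_, hmemB⟩ hlbB) (csInf_le ⟨B s, hlbB⟩ hmemB)⟩
  · -- Max state
    have hubG : ∀ x ∈ {x | ∃ a ∈ Γ.avail s, x = G (Γ.tr s a)}, x ≤ G s := by
      rintro x ⟨a, ha, rfl⟩
      refine le_of_tendsto_of_tendsto' (hRHSg s a) (hGlim s) (fun n => ?_)
      have h1 := hmaxle n s hmax a ha
      have h2 : (0:ℝ) ≤ 1 - l n := by have := hl1 n; linarith
      exact mul_le_mul_of_nonneg_left h1 h2
    have hmemG : G s ∈ {x | ∃ a ∈ Γ.avail s, x = G (Γ.tr s a)} :=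
      ⟨σs s, hσs_av s, ((hstar s).1).symm⟩
    have hubB : ∀ x ∈ {x | ∃ a ∈ Γ.avail s, G (Γ.tr s a) = G s ∧
        x = Γ.price s a - G s + B (Γ.tr s a)}, x ≤ B s := by
      rintro x ⟨a, ha, hGa, rfl⟩
      refine le_of_tendsto_of_tendsto' (hRHSb s a hGa) (hBlim s) (fun n => ?_)
      exact sub_le_sub_right (hmaxle n s hmax a ha) _
    have hmemB : B s ∈ {x | ∃ a ∈ Γ.avail s, G (Γ.tr s a) = G s ∧
        x = Γ.price s a - G s + B (Γ.tr s a)} :=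
      ⟨σs s, hσs_av s, (hstar s).1, (hstar s).2⟩
    refine ⟨le_antisymm (le_csSup ⟨G s, hubG⟩ hmemG) (csSup_le ⟨_, hmemG⟩ hubG),
      ⟨σs s, hσs_av s, (hstar s).1⟩,
      le_antisymm (le_csSup ⟨B s, hubB⟩ hmemB) (csSup_le ⟨_, hmemB⟩ hubB)⟩
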